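/- Let f ∈ ℚ[[t]] be the unique formal power series with f(0)=0 satisfying f = t + tf + 2t²f + t²f² + t³f². Then the coefficients of f are nonnegative integers, and the coefficient of tⁿ in f equals the Riordan number R(n+1) for all n ≥ 0. -/

import Mathlib

/-- The Riordan numbers: `R(0)=1`, `R(1)=0`, `(n+2)·R(n+1) = n·(2R(n)+3R(n-1))`. -/
def riordan : ℕ → ℚ
  | 0 => 1
  | 1 => 0
  | (n+2) => ((n : ℚ) + 1) * (2 * riordan (n+1) + 3 * riordan n) / ((n : ℚ) + 3)

open PowerSeries

private lemma natsum {α : Type*} (s : Finset α) (g : α → ℚ)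
    (h : ∀ x ∈ s, ∃ m : ℕ, g x = m) : ∃ m : ℕ, ∑ x ∈ s, g x = m := by
  classical
  induction s using Finset.induction_on with
  | empty => exact ⟨0, by simp⟩
  | @insert a s' hx ih =>
    obtain ⟨m1, hm1⟩ := h a (Finset.mem_insert_self a s')
    obtain ⟨m2, hm2⟩ := ih (fun x hxs => h x (Finset.mem_insert_of_mem hxs))
    exact ⟨m1 + m2, by rw [Finset.sum_insert hx, hm1, hm2]; push_cast; ring⟩

/-- Let `f ∈ ℚ[[t]]` with `f(0)=0` satisfy `f = t + tf + 2t²f + t²f² + t³f²`.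
Then the coefficients of `f` are nonnegative integers, and the coefficient of
`tⁿ` in `f` equals the Riordan number `R(n+1)` for all `n ≥ 0`. -/
theorem coeff_f_eq_riordan (f : PowerSeries ℚ)
    (hf0 : constantCoeff f = 0)
    (hf : f = X + X * f + 2 * X^2 * f + X^2 * f^2 + X^3 * f^2) :
    ∀ n : ℕ, (∃ m : ℕ, PowerSeries.coeff n f = m) ∧
      PowerSeries.coeff n f = riordan (n+1) := by
  have hfC : f = X + X*f + C 2 * (X^2*f) + X^2*(f*f) + X^3*(f*f) := by
    rw [map_ofNat]; linear_combination hf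
  have a0 : coeff 0 f = 0 := by rw [coeff_zero_eq_constantCoeff_apply]; exact hf0
  have c00 : coeff 0 (f*f) = 0 := by
    rw [coeff_zero_eq_constantCoeff_apply, map_mul, hf0, zero_mul]
  -- coefficient extraction from the functional equation
  have hcoeff : ∀ n : ℕ, coeff (n+1) f =
      (if n + 1 = 1 then (1:ℚ) else 0) + coeff n f
      + 2 * (if 2 ≤ n+1 then coeff (n-1) f else 0)
      + (if 2 ≤ n+1 then coeff (n-1) (f*f) else 0)
      + (if 3 ≤ n+1 then coeff (n-2) (f*f) else 0) := by
    intro n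
    have h := congrArg (⇑(coeff (n+1))) hfC
    simp only [map_add, coeff_C_mul, coeff_succ_X_mul, coeff_X_pow_mul', coeff_X] at h
    exact h
  have a1 : coeff 1 f = 1 := by have h := hcoeff 0; norm_num [a0] at h; exact h
  have a2 : coeff 2 f = 1 := by have h := hcoeff 1; norm_num [a0, a1, c00] at h; exact h
  -- derive the linear ODE
  have hf' : f = X + X*f + X*(X*f) + X*(X*f) + X*(X*(f*f)) + X*(X*(X*(f*f))) := by
    linear_combination hf
  have hd := congrArg (⇑(d⁄dX ℚ)) hf'
  simp only [map_add, Derivation.leibniz, derivative_X, smul_eq_mul, mul_one, one_mul] at hd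
  have key : (2*(X^2+X^3)*f + (X+2*X^2-1)) *
      ((X-2*X^2-3*X^3) * (d⁄dX ℚ f) - ((-2)+2*X+6*X^2)*f - 3*X) = 0 := by
    linear_combination (-X+2*X^2+3*X^3) * hd + (X+3*X^2-2) * hf
  have hu : (2*(X^2+X^3)*f + (X+2*X^2-1)) ≠ 0 := by
    intro h
    have h0 := congrArg (constantCoeff) h
    simp [hf0] at h0
  have hT : (X-2*X^2-3*X^3) * (d⁄dX ℚ f) = (-2+2*X+6*X^2)*f + 3*X := by
    rcases mul_eq_zero.mp key with h | h
    · exact absurd h hu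
    · linear_combination h
  -- the three-term recurrence
  have hrec : ∀ n : ℕ, ((n:ℚ)+5) * coeff (n+3) f
      = (2*(n:ℚ)+6) * coeff (n+2) f + (3*(n:ℚ)+9) * coeff (n+1) f := by
    intro n
    have hT2 : X * (d⁄dX ℚ f) = C 2 * (X^2*(d⁄dX ℚ f)) + C 3 * (X^3*(d⁄dX ℚ f))
        - C 2 * f + C 2 * (X*f) + C 6 * (X^2*f) + C 3 * X := by
      rw [map_ofNat, map_ofNat, map_ofNat]
      linear_combination hT
    have h := congrArg (⇑(coeff (n+3))) hT2
    have e1 : ∀ g : ℚ⟦X⟧, coeff (n+3) (X * g) = coeff (n+2) g :=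
      fun g => coeff_succ_X_mul (n+2) g
    have e2 : ∀ g : ℚ⟦X⟧, coeff (n+3) (X^2 * g) = coeff (n+1) g :=
      fun g => coeff_X_pow_mul g 2 (n+1)
    have e3 : ∀ g : ℚ⟦X⟧, coeff (n+3) (X^3 * g) = coeff n g :=
      fun g => coeff_X_pow_mul g 3 n
    simp only [map_add, map_sub, coeff_C_mul, e1, e2, e3, coeff_X, coeff_derivative] at h
    rw [if_neg (by omega)] at h
    push_cast at h
    linear_combination h
  -- equality with Riordan numbers
  have ha : ∀ n : ℕ, coeff n f = riordan (n+1) := by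
    intro n
    induction n using Nat.strong_induction_on with
    | _ n ih =>
      match n with
      | 0 => simpa [riordan] using a0
      | 1 => rw [a1]; norm_num [riordan]
      | 2 => rw [a2]; norm_num [riordan]
      | (k+3) =>
        have r2 : coeff (k+2) f = riordan (k+3) := ih (k+2) (by omega)
        have r1 : coeff (k+1) f = riordan (k+2) := ih (k+1) (by omega)
        have h := hrec k
        rw [r2, r1] at h
        have hrio : riordan (k+3+1)
            = ((k:ℚ)+3) * (2*riordan (k+3) + 3*riordan (k+2)) / ((k:ℚ)+5) := by
          show riordan (k+2+2) = _
          rw [riordan]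
          norm_num
          ring_nf
        rw [hrio, eq_div_iff (show ((k:ℚ)+5) ≠ 0 by positivity)]
        linear_combination h
  -- integrality
  have hnat : ∀ n : ℕ, ∃ m : ℕ, coeff n f = m := by
    intro n
    induction n using Nat.strong_induction_on with
    | _ n ih =>
      match n with
      | 0 => exact ⟨0, by simpa using a0⟩
      | (n+1) =>
        have h := hcoeff n
        have hmul : ∀ k : ℕ, k < n → ∃ m : ℕ, coeff k (f*f) = m := by
          intro k hk
          rw [coeff_mul]
          apply natsum
          rintro ⟨i, j⟩ hij
          rw [Finset.HasAntidiagonal.mem_antidiagonal] at hij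
          obtain ⟨mi, hmi⟩ := ih i (by omega)
          obtain ⟨mj, hmj⟩ := ih j (by omega)
          exact ⟨mi * mj, by simp [hmi, hmj]⟩
        have t1 : ∃ m : ℕ, (if n + 1 = 1 then (1:ℚ) else 0) = m := by
          split_ifs
          · exact ⟨1, by norm_num⟩
          · exact ⟨0, by norm_num⟩
        have t2 := ih n (by omega)
        have t3 : ∃ m : ℕ, (if 2 ≤ n+1 then coeff (n-1) f else 0) = m := by
          split_ifs with hc
          · exact ih (n-1) (by omega)
          · exact ⟨0, by norm_num⟩
        have t4 : ∃ m : ℕ, (if 2 ≤ n+1 then coeff (n-1) (f*f) else 0) = m := by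
          split_ifs with hc
          · rcases Nat.eq_or_lt_of_le hc with hc' | hc'
            · have : n - 1 = 0 := by omega
              exact ⟨0, by rw [this, c00]; norm_num⟩
            · exact hmul (n-1) (by omega)
          · exact ⟨0, by norm_num⟩
        have t5 : ∃ m : ℕ, (if 3 ≤ n+1 then coeff (n-2) (f*f) else 0) = m := by
          split_ifs with hc
          · rcases Nat.eq_or_lt_of_le hc with hc' | hc'
            · have : n - 2 = 0 := by omega
              exact ⟨0, by rw [this, c00]; norm_num⟩
            · exact hmul (n-2) (by omega)
          · exact ⟨0, by norm_num⟩
        obtain ⟨m1, e1⟩ := t1; obtain ⟨m2, e2⟩ := t2; obtain ⟨m3, e3⟩ := t3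
        obtain ⟨m4, e4⟩ := t4; obtain ⟨m5, e5⟩ := t5
        refine ⟨m1 + m2 + 2*m3 + m4 + m5, ?_⟩
        rw [h, e1, e2, e3, e4, e5]; push_cast; ring
  exact fun n => ⟨hnat n, ha n⟩
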